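/- Let Γ_B be the lazy Young graph: level-n vertices are pairs (n,λ) with λ a Young diagram, |λ| ≤ n; (n-1,μ) is joined to (n,λ) iff λ = μ, λ = μ+□, or λ = μ−□. Then the number of paths from the root (0,∅) to (n,λ) equals M(n,|λ|)·f^λ, where M is the array defined by the recursion M(n,n)=1, M(n,l)=0 for l>n, M(1,0)=1, M(n,0)=M(n-1,0)+M(n-1,1), M(n,l)=M(n-1,l-1)+M(n-1,l)+(l+1)·M(n-1,l+1) for 1≤l≤n-1, and f^λ is the number of standard Young tableaux of shape λ. -/
import Mathlib

open scoped Classical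
open Finset

namespace Stmt16Aux


def aboveSet (μ : YoungDiagram) : Finset ℕ :=
  (Finset.range (μ.colLen 0 + 2)).filter (fun i => i = 0 ∨ μ.rowLen i < μ.rowLen (i - 1))

def belowSet (μ : YoungDiagram) : Finset ℕ :=
  (Finset.range (μ.colLen 0 + 1)).filter (fun i => μ.rowLen (i + 1) < μ.rowLen i)

lemma lt_colLen_of_rowLen_pos {μ : YoungDiagram} {i : ℕ} (h : 0 < μ.rowLen i) :
    i < μ.colLen 0 :=
  YoungDiagram.mem_iff_lt_colLen.mp (YoungDiagram.mem_iff_lt_rowLen.mpr h)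

lemma mem_aboveSet {μ : YoungDiagram} {i : ℕ} :
    i ∈ aboveSet μ ↔ (i = 0 ∨ μ.rowLen i < μ.rowLen (i - 1)) := by
  constructor
  · intro h; exact (Finset.mem_filter.mp h).2
  · intro h
    refine Finset.mem_filter.mpr ⟨Finset.mem_range.mpr ?_, h⟩
    rcases h with rfl | h
    · omega
    · rcases Nat.eq_zero_or_pos i with rfl | hi
      · omega
      · have := lt_colLen_of_rowLen_pos (μ := μ) (i := i - 1) (by omega)
        omega

lemma mem_belowSet {μ : YoungDiagram} {i : ℕ} :
    i ∈ belowSet μ ↔ μ.rowLen (i + 1) < μ.rowLen i := by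
  constructor
  · intro h; exact (Finset.mem_filter.mp h).2
  · intro h
    refine Finset.mem_filter.mpr ⟨Finset.mem_range.mpr ?_, h⟩
    have := lt_colLen_of_rowLen_pos (μ := μ) (i := i) (by omega)
    omega

lemma card_aboveSet (μ : YoungDiagram) :
    (aboveSet μ).card = (belowSet μ).card + 1 := by
  have hset : aboveSet μ = insert 0 ((belowSet μ).image (· + 1)) := by
    ext j
    rw [mem_aboveSet, Finset.mem_insert, Finset.mem_image]
    constructor
    · rintro (rfl | h)
      · exact Or.inl rfl
      · rcases Nat.eq_zero_or_pos j with rfl | hj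
        · exact Or.inl rfl
        · refine Or.inr ⟨j - 1, mem_belowSet.mpr ?_, by omega⟩
          have : j - 1 + 1 = j := by omega
          rw [this]; exact h
    · rintro (rfl | ⟨i, hi, rfl⟩)
      · exact Or.inl rfl
      · right
        have := mem_belowSet.mp hi
        simpa using this
  rw [hset, Finset.card_insert_of_notMem, Finset.card_image_of_injective]
  · intro a b hab; simpa using hab
  · simp only [Finset.mem_image, not_exists]
    intro x hx
    omega

lemma lower_insert (μ : YoungDiagram) (i : ℕ)
    (hi : i = 0 ∨ μ.rowLen i < μ.rowLen (i - 1)) :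
    IsLowerSet (↑(insert (i, μ.rowLen i) μ.cells) : Set (ℕ × ℕ)) := by
  intro x y hyx hx
  simp only [Finset.coe_insert, Set.mem_insert_iff, Finset.mem_coe,
    YoungDiagram.mem_cells] at hx ⊢
  obtain ⟨a, b⟩ := y
  rcases hx with rfl | hx
  · obtain ⟨ha, hb⟩ := Prod.mk_le_mk.mp hyx
    rcases eq_or_lt_of_le ha with rfl | ha'
    · rcases eq_or_lt_of_le hb with rfl | hb'
      · exact Or.inl rfl
      · exact Or.inr (YoungDiagram.mem_iff_lt_rowLen.mpr hb')
    · right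
      rcases hi with rfl | hi
      · omega
      · refine YoungDiagram.mem_iff_lt_rowLen.mpr ?_
        have h2 : μ.rowLen (i - 1) ≤ μ.rowLen a := μ.rowLen_anti a (i - 1) (by omega)
        omega
  · exact Or.inr (μ.isLowerSet hyx hx)

def addCell (μ : YoungDiagram) (i : ℕ)
    (hi : i = 0 ∨ μ.rowLen i < μ.rowLen (i - 1)) : YoungDiagram :=
  ⟨insert (i, μ.rowLen i) μ.cells, lower_insert μ i hi⟩

lemma corner_notMem (μ : YoungDiagram) (i : ℕ) : (i, μ.rowLen i) ∉ μ.cells := by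
  rw [YoungDiagram.mem_cells, YoungDiagram.mem_iff_lt_rowLen]
  omega

lemma addCell_le (μ : YoungDiagram) (i : ℕ) (hi) : μ ≤ addCell μ i hi :=
  YoungDiagram.cells_subset_iff.mp (Finset.subset_insert _ _)

lemma addCell_card (μ : YoungDiagram) (i : ℕ) (hi) :
    (addCell μ i hi).card = μ.card + 1 := by
  show (insert (i, μ.rowLen i) μ.cells).card = μ.cells.card + 1
  exact Finset.card_insert_of_notMem (corner_notMem μ i)

lemma exists_insert_of_cover {μ ν : YoungDiagram} (h1 : μ ≤ ν)
    (h2 : ν.card = μ.card + 1) :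
    ∃ c, c ∉ μ.cells ∧ ν.cells = insert c μ.cells := by
  have hsub : μ.cells ⊆ ν.cells := YoungDiagram.cells_subset_iff.2 h1
  have h3 : (ν.cells \ μ.cells).card = 1 := by
    rw [Finset.card_sdiff_of_subset hsub]
    have h2' : ν.cells.card = μ.cells.card + 1 := h2
    omega
  obtain ⟨c, hc⟩ := Finset.card_eq_one.mp h3
  have hcm : c ∈ ν.cells \ μ.cells := hc ▸ Finset.mem_singleton_self c
  refine ⟨c, (Finset.mem_sdiff.mp hcm).2, ?_⟩
  apply Finset.Subset.antisymm
  · intro x hx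
    by_cases hxμ : x ∈ μ.cells
    · exact Finset.mem_insert_of_mem hxμ
    · have hxs : x ∈ ν.cells \ μ.cells := Finset.mem_sdiff.mpr ⟨hx, hxμ⟩
      rw [hc, Finset.mem_singleton] at hxs
      exact hxs ▸ Finset.mem_insert_self _ _
  · intro x hx
    rcases Finset.mem_insert.mp hx with rfl | hx
    · exact (Finset.mem_sdiff.mp hcm).1
    · exact hsub hx

lemma cell_spec {μ ν : YoungDiagram} {a b : ℕ}
    (hab : (a, b) ∉ μ.cells) (hcells : ν.cells = insert (a, b) μ.cells) :
    b = μ.rowLen a ∧ (a = 0 ∨ μ.rowLen a < μ.rowLen (a - 1)) := by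
  have habν : (a, b) ∈ ν := by
    rw [← YoungDiagram.mem_cells, hcells]; exact Finset.mem_insert_self _ _
  have hmemμ : ∀ p : ℕ × ℕ, p ∈ ν → p ≠ (a, b) → p ∈ μ := by
    intro p hp hne
    have : p ∈ ν.cells := hp
    rw [hcells, Finset.mem_insert] at this
    rcases this with h | h
    · exact absurd h hne
    · exact h
  have hble : ¬ b < μ.rowLen a := fun h => hab (YoungDiagram.mem_iff_lt_rowLen.mpr h)
  have hge : μ.rowLen a ≥ b := by
    rcases Nat.eq_zero_or_pos b with rfl | hb
    · omega
    · have h1 : (a, b - 1) ∈ ν := ν.up_left_mem le_rfl (by omega) habν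
      have h2 : (a, b - 1) ∈ μ := hmemμ _ h1 (by simp; omega)
      have := YoungDiagram.mem_iff_lt_rowLen.mp h2
      omega
  have hbeq : b = μ.rowLen a := by omega
  refine ⟨hbeq, ?_⟩
  rcases Nat.eq_zero_or_pos a with rfl | ha
  · exact Or.inl rfl
  · right
    have h1 : (a - 1, b) ∈ ν := ν.up_left_mem (by omega) le_rfl habν
    have h2 : (a - 1, b) ∈ μ := hmemμ _ h1 (by simp; omega)
    have := YoungDiagram.mem_iff_lt_rowLen.mp h2
    omega

lemma card_above_eq (above : YoungDiagram → Finset YoungDiagram)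
    (habove : ∀ μ ν, ν ∈ above μ ↔ μ ≤ ν ∧ ν.card = μ.card + 1) (μ : YoungDiagram) :
    (above μ).card = (aboveSet μ).card := by
  symm
  apply Finset.card_bij (i := fun a ha => addCell μ a (mem_aboveSet.mp ha))
  · intro a ha
    exact (habove μ _).mpr ⟨addCell_le μ a _, addCell_card μ a _⟩
  · intro a ha b hb heq
    have : (a, μ.rowLen a) ∈ (addCell μ b (mem_aboveSet.mp hb)).cells := by
      rw [← heq]; exact Finset.mem_insert_self _ _
    rcases Finset.mem_insert.mp this with h | h
    · exact (Prod.mk.injEq _ _ _ _ ▸ h).1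
    · exact absurd h (corner_notMem μ a)
  · intro ν hν
    obtain ⟨hle, hcard⟩ := (habove μ ν).mp hν
    obtain ⟨c, hcm, hcells⟩ := exists_insert_of_cover hle hcard
    obtain ⟨a, b⟩ := c
    obtain ⟨hbeq, hcond⟩ := cell_spec hcm hcells
    refine ⟨a, mem_aboveSet.mpr hcond, ?_⟩
    apply YoungDiagram.ext
    show insert (a, μ.rowLen a) μ.cells = ν.cells
    rw [hcells, ← hbeq]

lemma lower_erase (μ : YoungDiagram) (i : ℕ) (hi : μ.rowLen (i + 1) < μ.rowLen i) :
    IsLowerSet (↑(μ.cells.erase (i, μ.rowLen i - 1)) : Set (ℕ × ℕ)) := by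
  intro x y hyx hx
  simp only [Finset.coe_erase, Set.mem_diff, Finset.mem_coe, YoungDiagram.mem_cells,
    Set.mem_singleton_iff] at hx ⊢
  obtain ⟨hxμ, hxne⟩ := hx
  refine ⟨μ.isLowerSet hyx hxμ, ?_⟩
  rintro rfl
  obtain ⟨p, q⟩ := x
  obtain ⟨hp, hq⟩ := Prod.mk_le_mk.mp hyx
  have hq1 : q < μ.rowLen p := YoungDiagram.mem_iff_lt_rowLen.mp hxμ
  have hq2 : μ.rowLen p ≤ μ.rowLen i := μ.rowLen_anti i p hp
  have hp2 : p = i := by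
    by_contra hne
    have : μ.rowLen p ≤ μ.rowLen (i + 1) := μ.rowLen_anti (i + 1) p (by omega)
    omega
  apply hxne
  rw [hp2]
  simp only [Prod.mk.injEq, true_and]
  omega

def removeCell (μ : YoungDiagram) (i : ℕ) (hi : μ.rowLen (i + 1) < μ.rowLen i) :
    YoungDiagram :=
  ⟨μ.cells.erase (i, μ.rowLen i - 1), lower_erase μ i hi⟩

lemma corner_mem (μ : YoungDiagram) (i : ℕ) (hi : μ.rowLen (i + 1) < μ.rowLen i) :
    (i, μ.rowLen i - 1) ∈ μ.cells := by
  rw [YoungDiagram.mem_cells, YoungDiagram.mem_iff_lt_rowLen]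
  omega

lemma removeCell_le (μ : YoungDiagram) (i : ℕ) (hi) : removeCell μ i hi ≤ μ :=
  YoungDiagram.cells_subset_iff.mp (Finset.erase_subset _ _)

lemma removeCell_card (μ : YoungDiagram) (i : ℕ) (hi) :
    μ.card = (removeCell μ i hi).card + 1 := by
  show μ.cells.card = (μ.cells.erase (i, μ.rowLen i - 1)).card + 1
  rw [Finset.card_erase_of_mem (corner_mem μ i hi)]
  have : (i, μ.rowLen i - 1) ∈ μ.cells := corner_mem μ i hi
  have : 0 < μ.cells.card := Finset.card_pos.mpr ⟨_, this⟩
  omega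

lemma card_below_eq (below : YoungDiagram → Finset YoungDiagram)
    (hbelow : ∀ ν μ, μ ∈ below ν ↔ μ ≤ ν ∧ ν.card = μ.card + 1) (lam : YoungDiagram) :
    (below lam).card = (belowSet lam).card := by
  symm
  apply Finset.card_bij (i := fun a ha => removeCell lam a (mem_belowSet.mp ha))
  · intro a ha
    exact (hbelow lam _).mpr ⟨removeCell_le lam a _, removeCell_card lam a _⟩
  · intro a ha b hb heq
    by_contra hne
    have hab : (a, lam.rowLen a - 1) ≠ (b, lam.rowLen b - 1) := by
      simp only [ne_eq, Prod.mk.injEq, not_and]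
      intro h; exact absurd h hne
    have hmem : (a, lam.rowLen a - 1) ∈ (removeCell lam b (mem_belowSet.mp hb)).cells := by
      show _ ∈ lam.cells.erase _
      exact Finset.mem_erase.mpr ⟨hab, corner_mem lam a (mem_belowSet.mp ha)⟩
    rw [← heq] at hmem
    exact (Finset.mem_erase.mp hmem).1 rfl
  · intro μ hμ
    obtain ⟨hle, hcard⟩ := (hbelow lam μ).mp hμ
    obtain ⟨c, hcm, hcells⟩ := exists_insert_of_cover hle hcard
    obtain ⟨a, b⟩ := c
    obtain ⟨hbeq, _⟩ := cell_spec hcm hcells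
    -- lam.rowLen a = b + 1
    have habl : (a, b) ∈ lam := by
      rw [← YoungDiagram.mem_cells, hcells]; exact Finset.mem_insert_self _ _
    have hr1 : b < lam.rowLen a := YoungDiagram.mem_iff_lt_rowLen.mp habl
    have hr2 : lam.rowLen a ≤ b + 1 := by
      by_contra h
      have h1 : (a, b + 1) ∈ lam := YoungDiagram.mem_iff_lt_rowLen.mpr (by omega)
      have h2 : (a, b + 1) ∈ μ.cells := by
        have : (a, b + 1) ∈ lam.cells := h1
        rw [hcells, Finset.mem_insert] at this
        rcases this with h' | h'
        · exact absurd h' (by simp)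
        · exact h'
      have := YoungDiagram.mem_iff_lt_rowLen.mp (YoungDiagram.mem_cells _ |>.mp h2)
      omega
    have hreq : lam.rowLen a = b + 1 := by omega
    have hnext : lam.rowLen (a + 1) ≤ b := by
      by_contra h
      have h1 : (a + 1, b) ∈ lam := YoungDiagram.mem_iff_lt_rowLen.mpr (by omega)
      have h2 : (a + 1, b) ∈ μ.cells := by
        have : (a + 1, b) ∈ lam.cells := h1
        rw [hcells, Finset.mem_insert] at this
        rcases this with h' | h'
        · exact absurd h' (by simp)
        · exact h'
      have h3 : (a, b) ∈ μ := μ.up_left_mem (by omega) le_rfl h2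
      exact hcm h3
    have hmem : a ∈ belowSet lam := mem_belowSet.mpr (by omega)
    refine ⟨a, hmem, ?_⟩
    apply YoungDiagram.ext
    show lam.cells.erase (a, lam.rowLen a - 1) = μ.cells
    have : lam.rowLen a - 1 = b := by omega
    rw [this, hcells, Finset.erase_insert hcm]

lemma cover_count (below above : YoungDiagram → Finset YoungDiagram)
    (hbelow : ∀ ν μ, μ ∈ below ν ↔ μ ≤ ν ∧ ν.card = μ.card + 1)
    (habove : ∀ μ ν, ν ∈ above μ ↔ μ ≤ ν ∧ ν.card = μ.card + 1) (μ : YoungDiagram) :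
    (above μ).card = (below μ).card + 1 := by
  rw [card_above_eq above habove, card_below_eq below hbelow, card_aboveSet]



lemma eq_of_le_card {μ ν : YoungDiagram} (h : μ ≤ ν) (hc : ν.card ≤ μ.card) : μ = ν :=
  YoungDiagram.ext (Finset.eq_of_subset_of_card_le (YoungDiagram.cells_subset_iff.2 h) hc)

lemma card_lt {μ ν : YoungDiagram} (h : μ < ν) : μ.card < ν.card :=
  Finset.card_lt_card (YoungDiagram.cells_ssubset_iff.2 h)

lemma bot_card : (⊥ : YoungDiagram).card = 0 := by
  simp [YoungDiagram.card, YoungDiagram.cells_bot]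

lemma eq_bot_of_card_eq_zero {μ : YoungDiagram} (h : μ.card = 0) : μ = ⊥ :=
  YoungDiagram.ext (by simpa [YoungDiagram.cells_bot] using Finset.card_eq_zero.mp h)

lemma card_sup_add_card_inf (μ ν : YoungDiagram) :
    (μ ⊔ ν).card + (μ ⊓ ν).card = μ.card + ν.card := by
  show (μ ⊔ ν).cells.card + (μ ⊓ ν).cells.card = _
  rw [YoungDiagram.cells_sup, YoungDiagram.cells_inf]
  exact Finset.card_union_add_card_inter _ _

lemma cover_sup {lam μ ν : YoungDiagram} (h1 : lam ≤ ν) (h2 : ν.card = lam.card + 1)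
    (h3 : μ ≤ ν) (h4 : ν.card = μ.card + 1) (h5 : μ ≠ lam) : ν = lam ⊔ μ := by
  have hcard : μ.card = lam.card := by omega
  have hne : ¬(lam ⊔ μ ≤ lam) := by
    intro h
    exact h5 (eq_of_le_card (le_trans le_sup_right h) (by omega))
  have hlt : lam < lam ⊔ μ := lt_of_le_of_ne le_sup_left (fun h => hne (h ▸ le_refl _))
  have h6 : lam.card < (lam ⊔ μ).card := card_lt hlt
  exact (eq_of_le_card (sup_le h1 h3) (by omega)).symm

lemma cover_inf {lam μ κ : YoungDiagram} (h1 : κ ≤ lam) (h2 : lam.card = κ.card + 1)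
    (h3 : κ ≤ μ) (h4 : μ.card = κ.card + 1) (h5 : μ ≠ lam) : κ = lam ⊓ μ := by
  have hne : lam ⊓ μ ≠ lam := by
    intro h
    have hlm : lam ≤ μ := by rw [← h]; exact inf_le_right
    exact h5 (eq_of_le_card hlm (by omega)).symm
  have hlt : lam ⊓ μ < lam := lt_of_le_of_ne inf_le_left hne
  have h6 : (lam ⊓ μ).card < lam.card := card_lt hlt
  exact eq_of_le_card (le_inf h1 h3) (by omega)

section Branch

variable (below above : YoungDiagram → Finset YoungDiagram)
    (hbelow : ∀ ν μ, μ ∈ below ν ↔ μ ≤ ν ∧ ν.card = μ.card + 1)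
    (habove : ∀ μ ν, ν ∈ above μ ↔ μ ≤ ν ∧ ν.card = μ.card + 1)
    (f : YoungDiagram → ℕ)
    (hf0 : f ⊥ = 1)
    (hf : ∀ ν, ν ≠ ⊥ → f ν = ∑ μ ∈ below ν, f μ)

-- assume cover_count proved elsewhere
variable (ccount : ∀ μ : YoungDiagram, (above μ).card = (below μ).card + 1)

include hbelow habove hf0 hf ccount in
lemma branch_step (lam : YoungDiagram)
    (IH : ∀ κ ∈ below lam, ∑ ν ∈ above κ, f ν = (κ.card + 1) * f κ) :
    ∑ ν ∈ above lam, f ν = (lam.card + 1) * f lam := by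
  classical
  set B := (above lam).biUnion (fun ν => (below ν).erase lam) with hB
  set B' := (below lam).biUnion (fun κ => (above κ).erase lam) with hB'
  have hdisj : (↑(above lam) : Set YoungDiagram).PairwiseDisjoint
      (fun ν => (below ν).erase lam) := by
    intro ν1 h1 ν2 h2 hne
    simp only [Finset.mem_coe] at h1 h2
    simp only [Function.onFun]
    rw [Finset.disjoint_left]
    intro μ hμ1 hμ2
    obtain ⟨hμne, hμb1⟩ := Finset.mem_erase.mp hμ1
    obtain ⟨_, hμb2⟩ := Finset.mem_erase.mp hμ2
    obtain ⟨ha1, ha2⟩ := (habove lam ν1).mp h1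
    obtain ⟨hb1, hb2⟩ := (hbelow ν1 μ).mp hμb1
    obtain ⟨ha1', ha2'⟩ := (habove lam ν2).mp h2
    obtain ⟨hb1', hb2'⟩ := (hbelow ν2 μ).mp hμb2
    exact hne ((cover_sup ha1 ha2 hb1 hb2 hμne).trans
      (cover_sup ha1' ha2' hb1' hb2' hμne).symm)
  have hdisj' : (↑(below lam) : Set YoungDiagram).PairwiseDisjoint
      (fun κ => (above κ).erase lam) := by
    intro κ1 h1 κ2 h2 hne
    simp only [Finset.mem_coe] at h1 h2
    simp only [Function.onFun]
    rw [Finset.disjoint_left]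
    intro μ hμ1 hμ2
    obtain ⟨hμne, hμb1⟩ := Finset.mem_erase.mp hμ1
    obtain ⟨_, hμb2⟩ := Finset.mem_erase.mp hμ2
    obtain ⟨ha1, ha2⟩ := (hbelow lam κ1).mp h1
    obtain ⟨hb1, hb2⟩ := (habove κ1 μ).mp hμb1
    obtain ⟨ha1', ha2'⟩ := (hbelow lam κ2).mp h2
    obtain ⟨hb1', hb2'⟩ := (habove κ2 μ).mp hμb2
    exact hne ((cover_inf ha1 ha2 hb1 hb2 hμne).trans
      (cover_inf ha1' ha2' hb1' hb2' hμne).symm)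
  have hA : ∑ ν ∈ above lam, f ν = (above lam).card * f lam + ∑ μ ∈ B, f μ := by
    rw [hB, Finset.sum_biUnion hdisj]
    have hcongr : ∀ ν ∈ above lam, f ν = f lam + ∑ μ ∈ (below ν).erase lam, f μ := by
      intro ν hν
      obtain ⟨hle, hcard⟩ := (habove lam ν).mp hν
      have hνbot : ν ≠ ⊥ := by
        intro h
        rw [h, bot_card] at hcard
        omega
      have hmem : lam ∈ below ν := (hbelow ν lam).mpr ⟨hle, hcard⟩
      rw [hf ν hνbot, ← Finset.sum_erase_add _ _ hmem]
      omega
    rw [Finset.sum_congr rfl hcongr, Finset.sum_add_distrib, Finset.sum_const, smul_eq_mul]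
  have hBeq : ∑ κ ∈ below lam, ((κ.card + 1) * f κ)
      = (below lam).card * f lam + ∑ μ ∈ B', f μ := by
    rw [hB', Finset.sum_biUnion hdisj']
    have hcongr : ∀ κ ∈ below lam,
        (κ.card + 1) * f κ = f lam + ∑ μ ∈ (above κ).erase lam, f μ := by
      intro κ hκ
      obtain ⟨hle, hcard⟩ := (hbelow lam κ).mp hκ
      have hmem : lam ∈ above κ := (habove κ lam).mpr ⟨hle, hcard⟩
      rw [← IH κ hκ, ← Finset.sum_erase_add _ _ hmem]
      omega
    rw [Finset.sum_congr rfl hcongr, Finset.sum_add_distrib, Finset.sum_const, smul_eq_mul]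
  have hC : ∑ κ ∈ below lam, ((κ.card + 1) * f κ) = lam.card * f lam := by
    by_cases hbot : lam = ⊥
    · subst hbot
      have hemp : below ⊥ = ∅ := by
        apply Finset.eq_empty_of_forall_notMem
        intro κ hκ
        have := ((hbelow ⊥ κ).mp hκ).2
        rw [bot_card] at this
        omega
      rw [hemp, bot_card]
      simp
    · have hcongr : ∀ κ ∈ below lam, (κ.card + 1) * f κ = lam.card * f κ := by
        intro κ hκ
        rw [((hbelow lam κ).mp hκ).2]
      rw [Finset.sum_congr rfl hcongr, ← Finset.mul_sum, ← hf lam hbot]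
  have hBB' : B = B' := by
    ext μ
    rw [hB, hB', Finset.mem_biUnion, Finset.mem_biUnion]
    constructor
    · rintro ⟨ν, hν, hμ⟩
      obtain ⟨hμne, hμb⟩ := Finset.mem_erase.mp hμ
      obtain ⟨ha1, ha2⟩ := (habove lam ν).mp hν
      obtain ⟨hb1, hb2⟩ := (hbelow ν μ).mp hμb
      have hsup : ν = lam ⊔ μ := cover_sup ha1 ha2 hb1 hb2 hμne
      have hcards : μ.card = lam.card := by omega
      have hie := card_sup_add_card_inf lam μ
      have hsupc : (lam ⊔ μ).card = lam.card + 1 := by rw [← hsup]; omega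
      have hinfc : (lam ⊓ μ).card + 1 = lam.card := by omega
      refine ⟨lam ⊓ μ, (hbelow lam _).mpr ⟨inf_le_left, hinfc.symm⟩, ?_⟩
      exact Finset.mem_erase.mpr ⟨hμne, (habove _ μ).mpr ⟨inf_le_right, by omega⟩⟩
    · rintro ⟨κ, hκ, hμ⟩
      obtain ⟨hμne, hμa⟩ := Finset.mem_erase.mp hμ
      obtain ⟨ha1, ha2⟩ := (hbelow lam κ).mp hκ
      obtain ⟨hb1, hb2⟩ := (habove κ μ).mp hμa
      have hinf : κ = lam ⊓ μ := cover_inf ha1 ha2 hb1 hb2 hμne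
      have hcards : μ.card = lam.card := by omega
      have hie := card_sup_add_card_inf lam μ
      have hinfc : (lam ⊓ μ).card + 1 = lam.card := by rw [← hinf]; omega
      have hsupc : (lam ⊔ μ).card = lam.card + 1 := by omega
      refine ⟨lam ⊔ μ, (habove lam _).mpr ⟨le_sup_left, hsupc⟩, ?_⟩
      exact Finset.mem_erase.mpr ⟨hμne, (hbelow _ μ).mpr ⟨le_sup_right, by omega⟩⟩
  have hkey : (below lam).card * f lam + ∑ μ ∈ B', f μ = lam.card * f lam :=
    hBeq.symm.trans hC
  rw [hA, ccount lam, hBB']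
  calc ((below lam).card + 1) * f lam + ∑ μ ∈ B', f μ
      = ((below lam).card * f lam + ∑ μ ∈ B', f μ) + f lam := by ring
    _ = lam.card * f lam + f lam := by rw [hkey]
    _ = (lam.card + 1) * f lam := by ring

include hbelow habove hf0 hf ccount in
lemma branch : ∀ n (lam : YoungDiagram), lam.card ≤ n →
    ∑ ν ∈ above lam, f ν = (lam.card + 1) * f lam := by
  intro n
  induction n with
  | zero =>
    intro lam hlam
    apply branch_step below above hbelow habove f hf0 hf ccount
    intro κ hκ
    have := ((hbelow lam κ).mp hκ).2
    omega
  | succ n ih =>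
    intro lam hlam
    apply branch_step below above hbelow habove f hf0 hf ccount
    intro κ hκ
    have := ((hbelow lam κ).mp hκ).2
    exact ih κ (by omega)

end Branch


section Main

variable (below above : YoungDiagram → Finset YoungDiagram)
    (hbelow : ∀ ν μ, μ ∈ below ν ↔ μ ≤ ν ∧ ν.card = μ.card + 1)
    (habove : ∀ μ ν, ν ∈ above μ ↔ μ ≤ ν ∧ ν.card = μ.card + 1)
    (f : YoungDiagram → ℕ)
    (hf0 : f ⊥ = 1)
    (hf : ∀ ν, ν ≠ ⊥ → f ν = ∑ μ ∈ below ν, f μ)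
    (P : ℕ → YoungDiagram → ℕ)
    (hP0 : ∀ l : YoungDiagram, P 0 l = if l = ⊥ then 1 else 0)
    (hPrec : ∀ n (l : YoungDiagram), P (n + 1) l =
      P n l + (∑ η ∈ below l, P n η) + ∑ μ ∈ above l, P n μ)
    (M : ℕ → ℕ → ℕ)
    (hdiag : ∀ n, M n n = 1)
    (hzero : ∀ n l, n < l → M n l = 0)
    (hrec0 : ∀ n, 1 ≤ n → M n 0 = M (n - 1) 0 + M (n - 1) 1)
    (hrec : ∀ n l, 1 ≤ n → 1 ≤ l → l ≤ n - 1 →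
      M n l = M (n - 1) (l - 1) + M (n - 1) l + (l + 1) * M (n - 1) (l + 1))

include hdiag hzero hrec in
lemma Mrec' (n c : ℕ) (hc : 1 ≤ c) :
    M (n + 1) c = M n (c - 1) + M n c + (c + 1) * M n (c + 1) := by
  rcases lt_trichotomy c (n + 1) with h | h | h
  · have := hrec (n + 1) c (by omega) hc (by omega)
    simpa using this
  · subst h
    rw [hdiag (n + 1), hzero n (n + 1) (by omega), hzero n (n + 2) (by omega)]
    have : n + 1 - 1 = n := by omega
    rw [this, hdiag n]
    ring
  · rw [hzero (n + 1) c (by omega), hzero n (c - 1) (by omega),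
      hzero n c (by omega), hzero n (c + 1) (by omega)]
    ring

include hbelow habove hf0 hf hP0 hPrec hdiag hzero hrec0 hrec in
lemma main : ∀ n (l : YoungDiagram), P n l = M n l.card * f l := by
  have ccount := cover_count below above hbelow habove
  have hbranch : ∀ lam : YoungDiagram,
      ∑ ν ∈ above lam, f ν = (lam.card + 1) * f lam := fun lam =>
    branch below above hbelow habove f hf0 hf ccount lam.card lam le_rfl
  intro n
  induction n with
  | zero =>
    intro l
    rw [hP0]
    by_cases hl : l = ⊥
    · subst hl
      rw [if_pos rfl, bot_card, hdiag 0, hf0]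
    · rw [if_neg hl, hzero 0 l.card ?_]
      · ring
      · rcases Nat.eq_zero_or_pos l.card with h | h
        · exact absurd (eq_bot_of_card_eq_zero h) hl
        · omega
  | succ n ih =>
    intro l
    rw [hPrec]
    by_cases hl : l = ⊥
    · subst hl
      have hemp : below (⊥ : YoungDiagram) = ∅ := by
        apply Finset.eq_empty_of_forall_notMem
        intro κ hκ
        have := ((hbelow ⊥ κ).mp hκ).2
        rw [bot_card] at this
        omega
      have habv : ∑ μ ∈ above (⊥ : YoungDiagram), P n μ
          = M n 1 * ∑ μ ∈ above (⊥ : YoungDiagram), f μ := by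
        rw [Finset.mul_sum]
        apply Finset.sum_congr rfl
        intro μ hμ
        have hc := ((habove ⊥ μ).mp hμ).2
        rw [bot_card] at hc
        rw [ih μ, hc]
      rw [hemp, habv, hbranch ⊥, ih ⊥, bot_card, hf0]
      have h0 : M (n + 1) 0 = M n 0 + M n 1 := by
        have := hrec0 (n + 1) (by omega)
        simpa using this
      rw [h0]
      ring
    · have hc1 : 1 ≤ l.card := by
        rcases Nat.eq_zero_or_pos l.card with h | h
        · exact absurd (eq_bot_of_card_eq_zero h) hl
        · omega
      have hblw : ∑ η ∈ below l, P n η = M n (l.card - 1) * f l := by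
        have : ∀ η ∈ below l, P n η = M n (l.card - 1) * f η := by
          intro η hη
          have hcη := ((hbelow l η).mp hη).2
          rw [ih η]
          congr 2
          omega
        rw [Finset.sum_congr rfl this, ← Finset.mul_sum, ← hf l hl]
      have habv : ∑ μ ∈ above l, P n μ = M n (l.card + 1) * ((l.card + 1) * f l) := by
        have : ∀ μ ∈ above l, P n μ = M n (l.card + 1) * f μ := by
          intro μ hμ
          have hcμ := ((habove l μ).mp hμ).2
          rw [ih μ, hcμ]
        rw [Finset.sum_congr rfl this, ← Finset.mul_sum, hbranch l]
      rw [hblw, habv, ih l, Mrec' M hdiag hzero hrec n l.card hc1]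
      ring

end Main

end Stmt16Aux

/-- In the lazy Young graph `Γ_B` (at each step one may add a box, remove a
box or stay), the number of paths from the root `(0, ∅)` to `(n, λ)` equals
`M n |λ| * f λ`, where `M` is the rook-Brauer array and `f λ` is the number of
standard Young tableaux of shape `λ`. -/
theorem stmt16
    (below above : YoungDiagram → Finset YoungDiagram)
    (hbelow : ∀ ν μ, μ ∈ below ν ↔ μ ≤ ν ∧ ν.card = μ.card + 1)
    (habove : ∀ μ ν, ν ∈ above μ ↔ μ ≤ ν ∧ ν.card = μ.card + 1)
    (f : YoungDiagram → ℕ)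
    (hf0 : f ⊥ = 1)
    (hf : ∀ ν, ν ≠ ⊥ → f ν = ∑ μ ∈ below ν, f μ)
    -- `P n l` : number of paths from the root `(0, ⊥)` to `(n, l)` in `Γ_B`
    (P : ℕ → YoungDiagram → ℕ)
    (hP0 : ∀ l : YoungDiagram, P 0 l = if l = ⊥ then 1 else 0)
    (hPrec : ∀ n (l : YoungDiagram), P (n + 1) l =
      P n l + (∑ η ∈ below l, P n η) + ∑ μ ∈ above l, P n μ)
    (M : ℕ → ℕ → ℕ)
    (hdiag : ∀ n, M n n = 1)
    (hzero : ∀ n l, n < l → M n l = 0)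
    (h10 : M 1 0 = 1)
    (hrec0 : ∀ n, 1 ≤ n → M n 0 = M (n - 1) 0 + M (n - 1) 1)
    (hrec : ∀ n l, 1 ≤ n → 1 ≤ l → l ≤ n - 1 →
      M n l = M (n - 1) (l - 1) + M (n - 1) l + (l + 1) * M (n - 1) (l + 1)) :
    ∀ n (l : YoungDiagram), l.card ≤ n → P n l = M n l.card * f l := by
  intro n l _
  exact Stmt16Aux.main below above hbelow habove f hf0 hf P hP0 hPrec M hdiag hzero hrec0 hrec n l
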